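/- arXiv:2605.20629 — 3 statements merged into one kernel-verified Lean document; each statement's English description precedes it below -/
import Mathlib

section
/- Let n ≥ 1 and let P be a family of subsets of [n] = {1,…,n} containing every singleton {a} for a ∈ [n], and such that P, ordered by inclusion, is a lattice (every two members of P have a least upper bound and a greatest lower bound within P). Then P contains an induced subposet order-isomorphic to the Boolean lattice B(3) if and only if there exist S_1, S_2, S_3 ∈ P and pairwise distinct a_1, a_2, a_3 ∈ [n] such that a_1, a_2 ∈ S_1 and a_3 ∉ S_1; a_1, a_3 ∈ S_2 and a_2 ∉ S_2; and a_2, a_3 ∈ S_3 and a_1 ∉ S_3 (i.e., the binary matrix whose columns are the characteristic vectors of the members of P contains a triangle up to row and column permutations). -/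
/-- Auxiliary map sending each subset of `Fin 3` to one of eight chosen values. -/
def B3map {α : Type*} (Z T₁ T₂ T₃ J12 J13 J23 Jall : α) (x : Finset (Fin 3)) : α :=
  if (0 : Fin 3) ∈ x then
    (if (1 : Fin 3) ∈ x then (if (2 : Fin 3) ∈ x then Jall else J12)
     else (if (2 : Fin 3) ∈ x then J13 else T₁))
  else
    (if (1 : Fin 3) ∈ x then (if (2 : Fin 3) ∈ x then J23 else T₂)
     else (if (2 : Fin 3) ∈ x then T₃ else Z))

/-- Let `P` be a family of subsets of `Fin n` containing every singleton and
forming a lattice under inclusion (every two members have a least upper bound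
and a greatest lower bound within `P`). Then `P` contains an induced subposet
order-isomorphic to the Boolean lattice `B(3)` if and only if there are
`S₁, S₂, S₃ ∈ P` and pairwise distinct `a₁, a₂, a₃` forming a triangle
configuration. -/
theorem b3_free_iff_no_triangle (n : ℕ) (P : Set (Finset (Fin n)))
    (hsing : ∀ a : Fin n, ({a} : Finset (Fin n)) ∈ P)
    (hjoin : ∀ S ∈ P, ∀ T ∈ P, ∃ J ∈ P, S ⊆ J ∧ T ⊆ J ∧
      ∀ U ∈ P, S ⊆ U → T ⊆ U → J ⊆ U)
    (hmeet : ∀ S ∈ P, ∀ T ∈ P, ∃ M ∈ P, M ⊆ S ∧ M ⊆ T ∧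
      ∀ U ∈ P, U ⊆ S → U ⊆ T → U ⊆ M) :
    (∃ f : Finset (Fin 3) → Finset (Fin n), (∀ x, f x ∈ P) ∧
        ∀ x y : Finset (Fin 3), x ⊆ y ↔ f x ⊆ f y) ↔
      ∃ S₁ ∈ P, ∃ S₂ ∈ P, ∃ S₃ ∈ P, ∃ a₁ a₂ a₃ : Fin n,
        a₁ ≠ a₂ ∧ a₁ ≠ a₃ ∧ a₂ ≠ a₃ ∧
        a₁ ∈ S₁ ∧ a₂ ∈ S₁ ∧ a₃ ∉ S₁ ∧
        a₁ ∈ S₂ ∧ a₃ ∈ S₂ ∧ a₂ ∉ S₂ ∧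
        a₂ ∈ S₃ ∧ a₃ ∈ S₃ ∧ a₁ ∉ S₃ := by
  constructor
  · rintro ⟨f, hfP, hf⟩
    obtain ⟨a₁, ha₁, ha₁'⟩ := Finset.not_subset.mp
      (fun h => (by decide : ¬ ({0} : Finset (Fin 3)) ⊆ {1,2}) ((hf _ _).mpr h))
    obtain ⟨a₂, ha₂, ha₂'⟩ := Finset.not_subset.mp
      (fun h => (by decide : ¬ ({1} : Finset (Fin 3)) ⊆ {0,2}) ((hf _ _).mpr h))
    obtain ⟨a₃, ha₃, ha₃'⟩ := Finset.not_subset.mp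
      (fun h => (by decide : ¬ ({2} : Finset (Fin 3)) ⊆ {0,1}) ((hf _ _).mpr h))
    have h0_01 : f {0} ⊆ f {0,1} := (hf _ _).mp (by decide)
    have h1_01 : f {1} ⊆ f {0,1} := (hf _ _).mp (by decide)
    have h0_02 : f {0} ⊆ f {0,2} := (hf _ _).mp (by decide)
    have h2_02 : f {2} ⊆ f {0,2} := (hf _ _).mp (by decide)
    have h1_12 : f {1} ⊆ f {1,2} := (hf _ _).mp (by decide)
    have h2_12 : f {2} ⊆ f {1,2} := (hf _ _).mp (by decide)
    refine ⟨f {0,1}, hfP _, f {0,2}, hfP _, f {1,2}, hfP _, a₁, a₂, a₃,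
      fun h => ha₁' (h ▸ h1_12 ha₂),
      fun h => ha₁' (h ▸ h2_12 ha₃),
      fun h => ha₂' (h ▸ h2_02 ha₃),
      h0_01 ha₁, h1_01 ha₂, ha₃',
      h0_02 ha₁, h2_02 ha₃, ha₂',
      h1_12 ha₂, h2_12 ha₃, ha₁'⟩
  · rintro ⟨S₁, hS₁, S₂, hS₂, S₃, hS₃, a₁, a₂, a₃, _, _, _,
      ha₁S₁, ha₂S₁, ha₃S₁, ha₁S₂, ha₃S₂, ha₂S₂, ha₂S₃, ha₃S₃, ha₁S₃⟩
    obtain ⟨T₁, hT₁P, hT₁S₁, hT₁S₂, hT₁g⟩ := hmeet S₁ hS₁ S₂ hS₂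
    obtain ⟨T₂, hT₂P, hT₂S₁, hT₂S₃, hT₂g⟩ := hmeet S₁ hS₁ S₃ hS₃
    obtain ⟨T₃, hT₃P, hT₃S₂, hT₃S₃, hT₃g⟩ := hmeet S₂ hS₂ S₃ hS₃
    have ha₁T₁ : a₁ ∈ T₁ := Finset.singleton_subset_iff.mp
      (hT₁g {a₁} (hsing a₁) (Finset.singleton_subset_iff.mpr ha₁S₁)
        (Finset.singleton_subset_iff.mpr ha₁S₂))
    have ha₂T₂ : a₂ ∈ T₂ := Finset.singleton_subset_iff.mp
      (hT₂g {a₂} (hsing a₂) (Finset.singleton_subset_iff.mpr ha₂S₁)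
        (Finset.singleton_subset_iff.mpr ha₂S₃))
    have ha₃T₃ : a₃ ∈ T₃ := Finset.singleton_subset_iff.mp
      (hT₃g {a₃} (hsing a₃) (Finset.singleton_subset_iff.mpr ha₃S₂)
        (Finset.singleton_subset_iff.mpr ha₃S₃))
    obtain ⟨M, hMP, hMT₁, hMT₂, _⟩ := hmeet T₁ hT₁P T₂ hT₂P
    obtain ⟨Z, hZP, hZM, hZT₃, _⟩ := hmeet M hMP T₃ hT₃P
    have hZT₁ : Z ⊆ T₁ := hZM.trans hMT₁
    have hZT₂ : Z ⊆ T₂ := hZM.trans hMT₂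
    obtain ⟨J12, hJ12P, hT₁J12, hT₂J12, hJ12l⟩ := hjoin T₁ hT₁P T₂ hT₂P
    obtain ⟨J13, hJ13P, hT₁J13, hT₃J13, hJ13l⟩ := hjoin T₁ hT₁P T₃ hT₃P
    obtain ⟨J23, hJ23P, hT₂J23, hT₃J23, hJ23l⟩ := hjoin T₂ hT₂P T₃ hT₃P
    obtain ⟨Jall, hJallP, hJ12Jall, hT₃Jall, hJalll⟩ := hjoin J12 hJ12P T₃ hT₃P
    have hT₁Jall : T₁ ⊆ Jall := hT₁J12.trans hJ12Jall
    have hT₂Jall : T₂ ⊆ Jall := hT₂J12.trans hJ12Jall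
    set F := B3map Z T₁ T₂ T₃ J12 J13 J23 Jall with hF
    -- key structural facts about F
    have key : ∀ x : Finset (Fin 3), F x ∈ P ∧ Z ⊆ F x ∧
        ((0 : Fin 3) ∈ x → T₁ ⊆ F x) ∧ ((1 : Fin 3) ∈ x → T₂ ⊆ F x) ∧
        ((2 : Fin 3) ∈ x → T₃ ⊆ F x) ∧
        (∀ U ∈ P, Z ⊆ U → ((0 : Fin 3) ∈ x → T₁ ⊆ U) → ((1 : Fin 3) ∈ x → T₂ ⊆ U) →
          ((2 : Fin 3) ∈ x → T₃ ⊆ U) → F x ⊆ U) := by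
      intro x
      by_cases h0 : (0 : Fin 3) ∈ x <;> by_cases h1 : (1 : Fin 3) ∈ x <;>
        by_cases h2 : (2 : Fin 3) ∈ x <;>
        simp only [hF, B3map, if_pos, if_neg, h0, h1, h2, if_true, if_false]
      · exact ⟨hJallP, hZT₁.trans hT₁Jall, fun _ => hT₁Jall, fun _ => hT₂Jall,
          fun _ => hT₃Jall, fun U hU _ u0 u1 u2 =>
            hJalll U hU (hJ12l U hU (u0 trivial) (u1 trivial)) (u2 trivial)⟩
      · exact ⟨hJ12P, hZT₁.trans hT₁J12, fun _ => hT₁J12, fun _ => hT₂J12,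
          fun h => h.elim, fun U hU _ u0 u1 _ => hJ12l U hU (u0 trivial) (u1 trivial)⟩
      · exact ⟨hJ13P, hZT₁.trans hT₁J13, fun _ => hT₁J13, fun h => h.elim,
          fun _ => hT₃J13, fun U hU _ u0 _ u2 => hJ13l U hU (u0 trivial) (u2 trivial)⟩
      · exact ⟨hT₁P, hZT₁, fun _ => subset_rfl, fun h => h.elim,
          fun h => h.elim, fun U _ _ u0 _ _ => u0 trivial⟩
      · exact ⟨hJ23P, hZT₂.trans hT₂J23, fun h => h.elim, fun _ => hT₂J23,
          fun _ => hT₃J23, fun U hU _ _ u1 u2 => hJ23l U hU (u1 trivial) (u2 trivial)⟩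
      · exact ⟨hT₂P, hZT₂, fun h => h.elim, fun _ => subset_rfl,
          fun h => h.elim, fun U _ _ _ u1 _ => u1 trivial⟩
      · exact ⟨hT₃P, hZT₃, fun h => h.elim, fun h => h.elim,
          fun _ => subset_rfl, fun U _ _ _ _ u2 => u2 trivial⟩
      · exact ⟨hZP, subset_rfl, fun h => h.elim, fun h => h.elim,
          fun h => h.elim, fun U _ uZ _ _ _ => uZ⟩
    -- membership of the marked points
    have hmem1 : ∀ x : Finset (Fin 3), a₁ ∈ F x ↔ (0 : Fin 3) ∈ x := by
      intro x
      constructor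
      · intro ha
        by_contra h0
        have hsub : F x ⊆ S₃ := (key x).2.2.2.2.2 S₃ hS₃ (hZT₂.trans hT₂S₃)
          (fun h => absurd h h0) (fun _ => hT₂S₃) (fun _ => hT₃S₃)
        exact ha₁S₃ (hsub ha)
      · intro h0; exact (key x).2.2.1 h0 ha₁T₁
    have hmem2 : ∀ x : Finset (Fin 3), a₂ ∈ F x ↔ (1 : Fin 3) ∈ x := by
      intro x
      constructor
      · intro ha
        by_contra h1
        have hsub : F x ⊆ S₂ := (key x).2.2.2.2.2 S₂ hS₂ (hZT₁.trans hT₁S₂)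
          (fun _ => hT₁S₂) (fun h => absurd h h1) (fun _ => hT₃S₂)
        exact ha₂S₂ (hsub ha)
      · intro h1; exact (key x).2.2.2.1 h1 ha₂T₂
    have hmem3 : ∀ x : Finset (Fin 3), a₃ ∈ F x ↔ (2 : Fin 3) ∈ x := by
      intro x
      constructor
      · intro ha
        by_contra h2
        have hsub : F x ⊆ S₁ := (key x).2.2.2.2.2 S₁ hS₁ (hZT₁.trans hT₁S₁)
          (fun _ => hT₁S₁) (fun _ => hT₂S₁) (fun h => absurd h h2)
        exact ha₃S₁ (hsub ha)
      · intro h2; exact (key x).2.2.2.2.1 h2 ha₃T₃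
    refine ⟨F, fun x => (key x).1, fun x y => ⟨fun hxy => ?_, fun hxy => ?_⟩⟩
    · exact (key x).2.2.2.2.2 (F y) (key y).1 (key y).2.1
        (fun h => (key y).2.2.1 (hxy h)) (fun h => (key y).2.2.2.1 (hxy h))
        (fun h => (key y).2.2.2.2.1 (hxy h))
    · intro i hi
      fin_cases i
      · exact (hmem1 y).mp (hxy ((hmem1 x).mpr hi))
      · exact (hmem2 y).mp (hxy ((hmem2 x).mpr hi))
      · exact (hmem3 y).mp (hxy ((hmem3 x).mpr hi))
end

section
/- Let D be a maximal ASPD on a finite set A with n = |A|. Then |D| = 2^{n−1}, and if n ≥ 2 then D has exactly two bottom alternatives. -/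
variable {α : Type*} [DecidableEq α]

/-- Preferences (linear orders written as lists, most preferred first) on `A`. -/
def PrefOn (A : Finset α) : Set (List α) :=
  {l | l.Nodup ∧ l.toFinset = A}

/-- Restriction of a preference to a subset `T`. -/
def restrictPref (l : List α) (T : Finset α) : List α :=
  l.filter (fun a => decide (a ∈ T))

/-- Arrow's single-peaked domain on `A`: for every triple `T ⊆ A` some `x ∈ T`
is never ranked last in the restriction of the domain to `T`. -/
def IsASPD (A : Finset α) (D : Set (List α)) : Prop :=
  D ⊆ PrefOn A ∧
    ∀ T : Finset α, T ⊆ A → T.card = 3 →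
      ∃ x ∈ T, ∀ l ∈ D, (restrictPref l T).getLast? ≠ some x

/-- Maximal Arrow's single-peaked domain on `A`. -/
def IsMaximalASPD (A : Finset α) (D : Set (List α)) : Prop :=
  IsASPD A D ∧ ∀ l ∈ PrefOn A, l ∉ D → ¬ IsASPD A (insert l D)

set_option linter.unusedSectionVars false
set_option maxHeartbeats 1000000

lemma aspd_restrict_concat_mem (l : List α) {c : α} {T : Finset α} (h : c ∈ T) :
    restrictPref (l ++ [c]) T = restrictPref l T ++ [c] := by
  simp [restrictPref, List.filter_append, h]

lemma aspd_restrict_concat_not_mem (l : List α) {c : α} {T : Finset α} (h : c ∉ T) :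
    restrictPref (l ++ [c]) T = restrictPref l T := by
  simp [restrictPref, List.filter_append, h]

lemma aspd_restrict_restrict (l : List α) {T S : Finset α} (h : T ⊆ S) :
    restrictPref (restrictPref l S) T = restrictPref l T := by
  simp only [restrictPref, List.filter_filter]
  refine List.filter_congr ?_
  intro y _
  by_cases hy : y ∈ T
  · simp [hy, h hy]
  · simp [hy]

lemma aspd_eq_dropLast_concat {l : List α} {c : α} (h : l.getLast? = some c) :
    l = l.dropLast ++ [c] := by
  have hne : l ≠ [] := fun h' => by simp [h'] at h
  rw [List.getLast?_eq_getLast hne] at h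
  rw [← Option.some.inj h]
  exact (List.dropLast_append_getLast hne).symm

lemma aspd_getLast?_restrict {l : List α} {c : α} {T : Finset α}
    (h : l.getLast? = some c) (hc : c ∈ T) :
    (restrictPref l T).getLast? = some c := by
  rw [aspd_eq_dropLast_concat h, aspd_restrict_concat_mem _ hc, List.getLast?_concat]

lemma aspd_prefOn_finite (A : Finset α) : (PrefOn A).Finite := by
  refine Set.Finite.subset (A.toList.permutations.toFinset).finite_toSet ?_
  intro l hl
  simp only [List.coe_toFinset, Set.mem_setOf_eq, List.mem_permutations]
  exact List.perm_of_nodup_nodup_toFinset_eq hl.1 A.nodup_toList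
    (by rw [hl.2, Finset.toList_toFinset])

lemma aspd_length_eq {A : Finset α} {l : List α} (hl : l ∈ PrefOn A) : l.length = A.card := by
  rw [← hl.2, List.toFinset_card_of_nodup hl.1]

theorem aspd_main : ∀ (n : ℕ) (A : Finset α) (D : Set (List α)), A.card = n →
    IsMaximalASPD A D →
    D.ncard = 2 ^ (n - 1) ∧
      (2 ≤ n → {a : α | ∃ l ∈ D, l.getLast? = some a}.ncard = 2) := by
  intro n
  induction n using Nat.strong_induction_on with
  | _ n IH =>
  intro A D hcard hD
  have hsub0 : D ⊆ PrefOn A := hD.1.1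
  have Dfin0 : D.Finite := (aspd_prefOn_finite A).subset hsub0
  rcases Nat.lt_or_ge n 2 with hn | hn
  · -- base case : no triples, D = PrefOn A
    have hDfull : D = PrefOn A := by
      refine Set.Subset.antisymm hsub0 fun l hl => ?_
      by_contra hnl
      refine hD.2 l hl hnl ⟨Set.insert_subset hl hsub0, fun T hT h3 => ?_⟩
      have := Finset.card_le_card hT
      omega
    have h1 : D.ncard = 1 := by
      rw [hDfull]
      interval_cases n
      · have hA : A = ∅ := Finset.card_eq_zero.mp hcard
        have hP : PrefOn A = {([] : List α)} := by
          ext l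
          simp only [PrefOn, Set.mem_setOf_eq, Set.mem_singleton_iff, hA]
          constructor
          · rintro ⟨hnd, hfin⟩
            exact (List.toFinset_eq_empty_iff l).mp hfin
          · rintro rfl
            simp
        rw [hP]
        exact Set.ncard_singleton _
      · obtain ⟨a, hA⟩ := Finset.card_eq_one.mp hcard
        have hP : PrefOn A = {[a]} := by
          ext l
          constructor
          · intro hl
            obtain ⟨bb, rfl⟩ := List.length_eq_one_iff.mp
              (by rw [aspd_length_eq hl, hA]; simp)
            have hfin := hl.2
            simp only [hA, List.toFinset_cons, List.toFinset_nil, insert_empty_eq] at hfin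
            simp [Finset.singleton_injective hfin]
          · rintro rfl
            exact ⟨by simp, by simp [hA]⟩
        rw [hP]
        exact Set.ncard_singleton _
    refine ⟨by rw [h1]; interval_cases n <;> rfl, fun h => absurd h (by omega)⟩
  · -- inductive step
    have hsub : D ⊆ PrefOn A := hD.1.1
    have Dfin : D.Finite := (aspd_prefOn_finite A).subset hsub
    obtain ⟨a0, ha0⟩ : ∃ a, a ∈ A := Finset.card_pos.mp (by omega)
    -- members of D are nonempty lists
    have hne_nil : ∀ l ∈ D, l ≠ [] := by
      intro l hl h
      have := aspd_length_eq (hsub hl)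
      rw [h] at this
      simp at this
      omega
    -- D is nonempty
    have hDne : D.Nonempty := by
      by_contra hc
      rw [Set.not_nonempty_iff_eq_empty] at hc
      have hP : A.toList ∈ PrefOn A := ⟨A.nodup_toList, Finset.toList_toFinset A⟩
      refine hD.2 A.toList hP (by simp [hc]) ⟨Set.insert_subset hP hsub, ?_⟩
      intro T hT h3
      obtain ⟨u, hu, v, hv, huv⟩ := Finset.one_lt_card.mp (by omega : 1 < T.card)
      by_cases hcase : (restrictPref A.toList T).getLast? = some u
      · refine ⟨v, hv, ?_⟩
        rintro l hl
        rw [hc] at hl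
        rcases hl with rfl | hl
        · rw [hcase]; simp [huv]
        · exact absurd hl (Set.notMem_empty l)
      · refine ⟨u, hu, ?_⟩
        rintro l hl
        rw [hc] at hl
        rcases hl with rfl | hl
        · exact hcase
        · exact absurd hl (Set.notMem_empty l)
    -- choice function
    have hxex : ∀ T : Finset α, ∃ y : α, T ⊆ A → T.card = 3 →
        y ∈ T ∧ ∀ l ∈ D, (restrictPref l T).getLast? ≠ some y := by
      intro T
      by_cases h : T ⊆ A ∧ T.card = 3
      · obtain ⟨y, hy1, hy2⟩ := hD.1.2 T h.1 h.2
        exact ⟨y, fun _ _ => ⟨hy1, hy2⟩⟩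
      · exact ⟨a0, fun h1 h2 => absurd ⟨h1, h2⟩ h⟩
    choose x hx using hxex
    -- membership criterion from maximality
    have hmem : ∀ l ∈ PrefOn A,
        (∀ T : Finset α, T ⊆ A → T.card = 3 → (restrictPref l T).getLast? ≠ some (x T)) →
        l ∈ D := by
      intro l hl hcond
      by_contra hnl
      refine hD.2 l hl hnl ⟨Set.insert_subset hl hsub, ?_⟩
      intro T hT h3
      refine ⟨x T, (hx T hT h3).1, ?_⟩
      rintro m (rfl | hm)
      · exact hcond T hT h3
      · exact (hx T hT h3).2 m hm
    -- bottoms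
    have hBotA : ∀ c, (∃ l ∈ D, l.getLast? = some c) → c ∈ A := by
      rintro c ⟨l, hl, hlast⟩
      have hcl : c ∈ l := by rw [aspd_eq_dropLast_concat hlast]; simp
      rw [← (hsub hl).2]; exact List.mem_toFinset.mpr hcl
    -- no three distinct bottoms
    have hle2 : ∀ a b c, (∃ l ∈ D, l.getLast? = some a) → (∃ l ∈ D, l.getLast? = some b) →
        (∃ l ∈ D, l.getLast? = some c) → a ≠ b → a ≠ c → b ≠ c → False := by
      rintro a b c ⟨la, hla, ha⟩ ⟨lb, hlb, hbb⟩ ⟨lc, hlc, hcc⟩ hab hac hbc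
      have hTA : ({a, b, c} : Finset α) ⊆ A := by
        intro y hy
        simp only [Finset.mem_insert, Finset.mem_singleton] at hy
        rcases hy with rfl | rfl | rfl
        · exact hBotA _ ⟨la, hla, ha⟩
        · exact hBotA _ ⟨lb, hlb, hbb⟩
        · exact hBotA _ ⟨lc, hlc, hcc⟩
      have hT3 : ({a, b, c} : Finset α).card = 3 :=
        Finset.card_eq_three.mpr ⟨a, b, c, hab, hac, hbc, rfl⟩
      obtain ⟨y, hy, hnever⟩ := hD.1.2 _ hTA hT3
      simp only [Finset.mem_insert, Finset.mem_singleton] at hy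
      rcases hy with rfl | rfl | rfl
      · exact hnever la hla (aspd_getLast?_restrict ha (by simp))
      · exact hnever lb hlb (aspd_getLast?_restrict hbb (by simp))
      · exact hnever lc hlc (aspd_getLast?_restrict hcc (by simp))
    -- one bottom
    obtain ⟨l0, hl0⟩ := hDne
    have hl0ne := hne_nil l0 hl0
    obtain ⟨a, haBot⟩ : ∃ a, ∃ l ∈ D, l.getLast? = some a :=
      ⟨l0.getLast hl0ne, l0, hl0, List.getLast?_eq_getLast hl0ne⟩
    -- a second bottom
    have hbex : ∃ b, (∃ l ∈ D, l.getLast? = some b) ∧ b ≠ a := by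
      by_contra hcon
      push_neg at hcon
      have hall : ∀ l ∈ D, l.getLast? = some a := by
        intro l hl
        have hne := hne_nil l hl
        rw [List.getLast?_eq_getLast hne,
          hcon _ ⟨l, hl, List.getLast?_eq_getLast hne⟩]
      have hl0a : l0.getLast? = some a := hall l0 hl0
      set m := l0.dropLast with hm
      have hl0eq : l0 = m ++ [a] := aspd_eq_dropLast_concat hl0a
      have hmne : m ≠ [] := by
        intro h
        have hlen := aspd_length_eq (hsub hl0)
        rw [hl0eq, h] at hlen
        simp at hlen; omega
      set s := m.dropLast with hs
      set c := m.getLast hmne with hcdef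
      have hmeq : m = s ++ [c] := (List.dropLast_append_getLast hmne).symm
      have hcm : c ∈ m := List.getLast_mem hmne
      have hamd : a ∉ m := by
        have hnd := (hsub hl0).1
        rw [hl0eq, List.nodup_append] at hnd
        exact fun h => hnd.2.2 _ h _ (by simp) rfl
      have hca : c ≠ a := fun h => hamd (h ▸ hcm)
      set l' := (s ++ [a]) ++ [c] with hl'
      have hperm : List.Perm l' l0 := by
        rw [hl', hl0eq, hmeq]
        simp only [List.append_assoc, List.cons_append, List.nil_append]
        exact List.Perm.append_left s (List.Perm.swap c a [])
      have hl'P : l' ∈ PrefOn A :=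
        ⟨hperm.nodup_iff.mpr (hsub hl0).1, by rw [List.toFinset_eq_of_perm _ _ hperm, (hsub hl0).2]⟩
      have hl'last : l'.getLast? = some c := List.getLast?_concat
      have hl'D : l' ∉ D := by
        intro h
        have h2 := hall l' h
        rw [hl'last] at h2
        exact hca (Option.some.inj h2)
      refine hD.2 l' hl'P hl'D ⟨Set.insert_subset hl'P hsub, ?_⟩
      intro T hT h3
      by_cases hacT : a ∈ T ∧ c ∈ T
      · have hns : ¬ T ⊆ {a, c} := by
          intro hsub2
          have hcle := Finset.card_le_card hsub2
          rw [Finset.card_pair (Ne.symm hca)] at hcle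
          omega
        obtain ⟨z, hzT, hz⟩ := Finset.not_subset.mp hns
        simp only [Finset.mem_insert, Finset.mem_singleton, not_or] at hz
        refine ⟨z, hzT, ?_⟩
        rintro mL (rfl | hmL)
        · rw [aspd_getLast?_restrict hl'last hacT.2]
          exact fun h => hz.2 (Option.some.inj h).symm
        · rw [aspd_getLast?_restrict (hall mL hmL) hacT.1]
          exact fun h => hz.1 (Option.some.inj h).symm
      · obtain ⟨y, hy, hnever⟩ := hD.1.2 T hT h3
        refine ⟨y, hy, ?_⟩
        rintro mL (rfl | hmL)
        · have heq : restrictPref l' T = restrictPref l0 T := by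
            rw [hl0eq, hmeq, hl']
            by_cases haT : a ∈ T
            · have hcT : c ∉ T := fun h => hacT ⟨haT, h⟩
              rw [aspd_restrict_concat_not_mem _ hcT, aspd_restrict_concat_mem _ haT,
                aspd_restrict_concat_mem _ haT, aspd_restrict_concat_not_mem _ hcT]
            · by_cases hcT : c ∈ T
              · rw [aspd_restrict_concat_mem _ hcT, aspd_restrict_concat_not_mem _ haT,
                  aspd_restrict_concat_not_mem _ haT, aspd_restrict_concat_mem _ hcT]
              · rw [aspd_restrict_concat_not_mem _ hcT, aspd_restrict_concat_not_mem _ haT,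
                  aspd_restrict_concat_not_mem _ haT, aspd_restrict_concat_not_mem _ hcT]
          rw [heq]
          exact hnever l0 hl0
        · exact hnever mL hmL
    obtain ⟨b, hbBot, hba⟩ := hbex
    -- the set of bottoms is {a, b}
    have hBotset : {c : α | ∃ l ∈ D, l.getLast? = some c} = {a, b} := by
      ext c
      simp only [Set.mem_setOf_eq, Set.mem_insert_iff, Set.mem_singleton_iff]
      constructor
      · intro hc
        by_contra hcc
        push_neg at hcc
        exact hle2 a b c haBot hbBot hc (Ne.symm hba) (Ne.symm hcc.1) (Ne.symm hcc.2)
      · rintro (rfl | rfl)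
        · exact haBot
        · exact hbBot
    have hlast_ab : ∀ l ∈ D, l.getLast? = some a ∨ l.getLast? = some b := by
      intro l hl
      have hne := hne_nil l hl
      have hmem2 : l.getLast hne ∈ {c : α | ∃ l ∈ D, l.getLast? = some c} :=
        ⟨l, hl, List.getLast?_eq_getLast hne⟩
      rw [hBotset] at hmem2
      rcases hmem2 with h | h
      · left; rw [List.getLast?_eq_getLast hne, h]
      · right; rw [List.getLast?_eq_getLast hne, h]
    have hxavoid : ∀ c, (∃ l ∈ D, l.getLast? = some c) →
        ∀ T, T ⊆ A → T.card = 3 → c ∈ T → x T ≠ c := by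
      rintro c ⟨l, hl, hlast⟩ T hT h3 hcT hxc
      exact (hx T hT h3).2 l hl (by rw [aspd_getLast?_restrict hlast hcT, hxc])
    -- pushdown: moving an achieved bottom to the very bottom stays in D
    have hpush : ∀ (c : α), c ∈ A → (∃ l ∈ D, l.getLast? = some c) →
        ∀ l ∈ D, restrictPref l (A.erase c) ++ [c] ∈ D := by
      intro c hcA hcBot l hl
      have hndl := (hsub hl).1
      have hr_nodup : (restrictPref l (A.erase c)).Nodup := hndl.filter _
      have hcr : c ∉ restrictPref l (A.erase c) := by
        intro hc
        have := List.of_mem_filter hc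
        simp at this
      have hrfin : (restrictPref l (A.erase c)).toFinset = A.erase c := by
        rw [restrictPref, List.toFinset_filter, (hsub hl).2]
        ext y
        simp only [Finset.mem_filter, Finset.mem_erase, decide_eq_true_eq]
        tauto
      apply hmem
      · constructor
        · rw [List.nodup_append]
          refine ⟨hr_nodup, List.nodup_singleton c, ?_⟩
          intro y hy z hz hyz
          simp only [List.mem_singleton] at hz
          subst hz hyz; exact hcr hy
        · rw [List.toFinset_append, hrfin]
          simp only [List.toFinset_cons, List.toFinset_nil, insert_empty_eq]
          rw [Finset.union_comm, ← Finset.insert_eq, Finset.insert_erase hcA]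
      · intro T hT h3
        by_cases hcT : c ∈ T
        · rw [aspd_restrict_concat_mem _ hcT, List.getLast?_concat]
          exact fun h => hxavoid c hcBot T hT h3 hcT (Option.some.inj h).symm
        · have hTsub : T ⊆ A.erase c := fun y hy =>
            Finset.mem_erase.mpr ⟨fun h => hcT (h ▸ hy), hT hy⟩
          rw [aspd_restrict_concat_not_mem _ hcT, aspd_restrict_restrict _ hTsub]
          exact (hx T hT h3).2 l hl
    -- chopped domains are maximal ASPDs
    have hchop : ∀ (c : α), c ∈ A → (∃ l ∈ D, l.getLast? = some c) →
        IsMaximalASPD (A.erase c) (List.dropLast '' {l | l ∈ D ∧ l.getLast? = some c}) := by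
      intro c hcA hcBot
      set Ec := List.dropLast '' {l | l ∈ D ∧ l.getLast? = some c} with hEc
      have hEcP : Ec ⊆ PrefOn (A.erase c) := by
        rintro _ ⟨l, ⟨hl, hlast⟩, rfl⟩
        have hleq : l = l.dropLast ++ [c] := aspd_eq_dropLast_concat hlast
        have hnd := (hsub hl).1
        have hndrop : l.dropLast.Nodup := hnd.sublist (List.dropLast_sublist l)
        have hcd : c ∉ l.dropLast := by
          rw [hleq, List.nodup_append] at hnd
          exact fun h => hnd.2.2 _ h _ (by simp) rfl
        refine ⟨hndrop, ?_⟩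
        have hun : l.dropLast.toFinset ∪ {c} = A := by
          have h2 : (l.dropLast ++ [c]).toFinset = A := by rw [← hleq]; exact (hsub hl).2
          simpa using h2
        ext y
        simp only [List.mem_toFinset, Finset.mem_erase]
        constructor
        · intro hy
          refine ⟨fun h => hcd (h ▸ hy), ?_⟩
          rw [← hun]
          exact Finset.mem_union_left _ (List.mem_toFinset.mpr hy)
        · rintro ⟨hyc, hyA⟩
          rw [← hun] at hyA
          rcases Finset.mem_union.mp hyA with h | h
          · exact List.mem_toFinset.mp h
          · exact absurd (Finset.mem_singleton.mp h) hyc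
      refine ⟨⟨hEcP, ?_⟩, ?_⟩
      · intro T hT h3
        have hTA : T ⊆ A := hT.trans (Finset.erase_subset _ _)
        refine ⟨x T, (hx T hTA h3).1, ?_⟩
        rintro _ ⟨l, ⟨hl, hlast⟩, rfl⟩
        have hcT : c ∉ T := fun h => (Finset.mem_erase.mp (hT h)).1 rfl
        have heq : restrictPref l.dropLast T = restrictPref l T := by
          conv_rhs => rw [aspd_eq_dropLast_concat hlast]
          rw [aspd_restrict_concat_not_mem _ hcT]
        rw [heq]
        exact (hx T hTA h3).2 l hl
      · intro mm hmm hmmE hbad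
        have hmmnd := hmm.1
        have hmmfin := hmm.2
        have hcmm : c ∉ mm := by
          intro h
          have h2 : c ∈ A.erase c := hmmfin ▸ List.mem_toFinset.mpr h
          exact (Finset.mem_erase.mp h2).1 rfl
        have hlsP : mm ++ [c] ∈ PrefOn A := by
          constructor
          · rw [List.nodup_append]
            refine ⟨hmmnd, List.nodup_singleton c, ?_⟩
            intro y hy z hz hyz
            simp only [List.mem_singleton] at hz
            subst hz hyz; exact hcmm hy
          · rw [List.toFinset_append, hmmfin]
            simp only [List.toFinset_cons, List.toFinset_nil, insert_empty_eq]
            rw [Finset.union_comm, ← Finset.insert_eq, Finset.insert_erase hcA]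
        have hlslast : (mm ++ [c]).getLast? = some c := List.getLast?_concat
        have hlsD : mm ++ [c] ∉ D := by
          intro h
          exact hmmE ⟨mm ++ [c], ⟨h, hlslast⟩, List.dropLast_concat⟩
        refine hD.2 _ hlsP hlsD ⟨Set.insert_subset hlsP hsub, ?_⟩
        intro T hT h3
        by_cases hcT : c ∈ T
        · refine ⟨x T, (hx T hT h3).1, ?_⟩
          rintro mL (rfl | hmL)
          · rw [aspd_getLast?_restrict hlslast hcT]
            exact fun h => hxavoid c hcBot T hT h3 hcT (Option.some.inj h).symm
          · exact (hx T hT h3).2 mL hmL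
        · have hTsub : T ⊆ A.erase c := fun y hy =>
            Finset.mem_erase.mpr ⟨fun h => hcT (h ▸ hy), hT hy⟩
          obtain ⟨y, hy, hnever⟩ := hbad.2 T hTsub h3
          refine ⟨y, hy, ?_⟩
          rintro mL (rfl | hmL)
          · have heq : restrictPref (mm ++ [c]) T = restrictPref mm T :=
              aspd_restrict_concat_not_mem _ hcT
            rw [heq]
            exact hnever mm (Set.mem_insert mm Ec)
          · have hps := hpush c hcA hcBot mL hmL
            have hr : restrictPref mL (A.erase c) ∈ Ec :=
              ⟨restrictPref mL (A.erase c) ++ [c], ⟨hps, List.getLast?_concat⟩,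
                List.dropLast_concat⟩
            have heq : restrictPref mL T = restrictPref (restrictPref mL (A.erase c)) T :=
              (aspd_restrict_restrict _ hTsub).symm
            rw [heq]
            exact hnever _ (Set.mem_insert_of_mem _ hr)
    -- counting
    have hacA := hBotA a haBot
    have hbcA := hBotA b hbBot
    have hinj : ∀ c : α, Set.InjOn List.dropLast {l | l ∈ D ∧ l.getLast? = some c} := by
      intro c l1 hl1 l2 hl2 heq
      rw [aspd_eq_dropLast_concat hl1.2, aspd_eq_dropLast_concat hl2.2, heq]
    have hcount : ∀ c, c ∈ A → (∃ l ∈ D, l.getLast? = some c) →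
        {l | l ∈ D ∧ l.getLast? = some c}.ncard = 2 ^ (n - 2) := by
      intro c hcA hcBot
      have hmax := hchop c hcA hcBot
      have hcarde : (A.erase c).card = n - 1 := by
        rw [Finset.card_erase_of_mem hcA, hcard]
      have hres := (IH (n - 1) (by omega) (A.erase c) _ hcarde hmax).1
      rw [← Set.ncard_image_of_injOn (hinj c), hres]
      have h12 : n - 1 - 1 = n - 2 := by omega
      rw [h12]
    have hDun : D = {l | l ∈ D ∧ l.getLast? = some a} ∪ {l | l ∈ D ∧ l.getLast? = some b} := by
      ext l
      constructor
      · intro hl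
        rcases hlast_ab l hl with h | h
        · exact Or.inl ⟨hl, h⟩
        · exact Or.inr ⟨hl, h⟩
      · rintro (h | h) <;> exact h.1
    have hdisj : Disjoint {l | l ∈ D ∧ l.getLast? = some a} {l | l ∈ D ∧ l.getLast? = some b} := by
      rw [Set.disjoint_left]
      rintro l ⟨_, h1⟩ ⟨_, h2⟩
      rw [h1] at h2
      exact hba (Option.some.inj h2).symm
    have hDcard : D.ncard = 2 ^ (n - 1) := by
      rw [hDun, Set.ncard_union_eq hdisj (Dfin.subset fun l h => h.1)
        (Dfin.subset fun l h => h.1), hcount a hacA haBot, hcount b hbcA hbBot]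
      have harith : n - 1 = (n - 2) + 1 := by omega
      rw [harith, pow_succ]
      ring
    exact ⟨hDcard, fun _ => by rw [hBotset]; exact Set.ncard_pair (Ne.symm hba)⟩

/-- A maximal Arrow's single-peaked domain on `A` has `2^{|A| - 1}` elements,
and if `|A| ≥ 2` it has exactly two bottom alternatives. -/
theorem maximal_aspd_card_and_bottoms (A : Finset α) (D : Set (List α))
    (hD : IsMaximalASPD A D) :
    D.ncard = 2 ^ (A.card - 1) ∧
      (2 ≤ A.card → {a : α | ∃ l ∈ D, l.getLast? = some a}.ncard = 2) := by
  exact aspd_main A.card A D rfl hD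
end

section
/- Let D be a maximal ASPD on a finite set A with n = |A| ≥ 3, and let a_1, a_2 be its two bottom alternatives. For {i,j} = {1,2} define D_i := {ω_{A∖{a_i}} : ω ∈ D, ω(n) = a_i} and D_{ij} := {ω_{A∖{a_i,a_j}} : ω ∈ D, ω(n) = a_i, ω(n−1) = a_j}. Then D_1, D_2, D_{12}, D_{21} are maximal ASPDs (on A∖{a_1}, A∖{a_2}, A∖{a_1,a_2}, and A∖{a_1,a_2}, respectively), and D_{12} = D_{21}. -/
set_option linter.deprecated false

variable {α : Type*} [DecidableEq α]

/-- The domain `D_i` obtained from `D` by restricting the preferences ending in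
the bottom alternative `a` to `A ∖ {a}`. -/
def bottomRestrict (A : Finset α) (D : Set (List α)) (a : α) : Set (List α) :=
  {m | ∃ l ∈ D, l.getLast? = some a ∧ m = restrictPref l (A.erase a)}

/-- The domain `D_{ij}` obtained from `D` by restricting the preferences with
last alternative `a₁` and second-to-last alternative `a₂` to `A ∖ {a₁, a₂}`. -/
def bottom2Restrict (A : Finset α) (D : Set (List α)) (a₁ a₂ : α) : Set (List α) :=
  {m | ∃ l ∈ D, l.getLast? = some a₁ ∧ l[A.card - 2]? = some a₂ ∧
    m = restrictPref l (A \ {a₁, a₂})}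

/-! ### Auxiliary lemmas about restriction -/

lemma restrict_append (l l' : List α) (T : Finset α) :
    restrictPref (l ++ l') T = restrictPref l T ++ restrictPref l' T :=
  List.filter_append _ _

lemma restrict_sub {S T : Finset α} (hST : S ⊆ T) (l : List α) :
    restrictPref (restrictPref l T) S = restrictPref l S := by
  unfold restrictPref
  rw [List.filter_filter]
  apply List.filter_congr
  intro a _
  by_cases h : a ∈ S <;> simp [h]
  exact hST h

lemma toFinset_restrict (l : List α) (T : Finset α) :
    (restrictPref l T).toFinset = l.toFinset ∩ T := by
  ext a
  simp [restrictPref, List.mem_toFinset, List.mem_filter]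

lemma restrict_eq_self {m : List α} {T : Finset α} (h : ∀ a ∈ m, a ∈ T) :
    restrictPref m T = m :=
  List.filter_eq_self.mpr (by intro a ha; simpa using h a ha)

lemma restrict_concat_mem {a : α} (m : List α) {T : Finset α} (h : a ∈ T) :
    (restrictPref (m ++ [a]) T).getLast? = some a := by
  rw [restrict_append]
  have : restrictPref [a] T = [a] := restrict_eq_self (by simpa using h)
  rw [this, List.getLast?_concat]

lemma restrict_concat_not_mem {a : α} (m : List α) {T : Finset α} (h : a ∉ T) :
    restrictPref (m ++ [a]) T = restrictPref m T := by
  rw [restrict_append]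
  have : restrictPref [a] T = [] := by simp [restrictPref, h]
  rw [this, List.append_nil]

lemma restrict_prefOn {A B : Finset α} (hBA : B ⊆ A) {l : List α} (hl : l ∈ PrefOn A) :
    restrictPref l B ∈ PrefOn B := by
  refine ⟨List.Nodup.filter _ hl.1, ?_⟩
  rw [toFinset_restrict, hl.2, Finset.inter_eq_right.mpr hBA]

lemma prefOn_concat {A : Finset α} {a : α} (ha : a ∈ A) {m : List α}
    (hm : m ∈ PrefOn (A.erase a)) : m ++ [a] ∈ PrefOn A := by
  have ham : a ∉ m := by
    intro h
    have : a ∈ A.erase a := hm.2 ▸ List.mem_toFinset.mpr h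
    exact Finset.notMem_erase a A this
  constructor
  · simp [List.nodup_append, hm.1, ham]
    rintro b hb rfl
    exact ham hb
  · rw [List.toFinset_append, hm.2]
    simp only [List.toFinset_cons, List.toFinset_nil, insert_empty_eq]
    ext c
    simp only [Finset.mem_union, Finset.mem_erase, Finset.mem_singleton]
    constructor
    · rintro (⟨_, hc⟩ | rfl) <;> [exact hc; exact ha]
    · intro hc
      by_cases hca : c = a
      · exact Or.inr hca
      · exact Or.inl ⟨hca, hc⟩

lemma prefOn_concat2 {A : Finset α} {a₁ a₂ : α} (h1 : a₁ ∈ A) (h2 : a₂ ∈ A)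
    (hne : a₁ ≠ a₂) {m : List α} (hm : m ∈ PrefOn (A \ {a₁, a₂})) :
    m ++ [a₂, a₁] ∈ PrefOn A := by
  have h1m : a₁ ∉ m := by
    intro h
    have : a₁ ∈ A \ {a₁, a₂} := hm.2 ▸ List.mem_toFinset.mpr h
    simp at this
  have h2m : a₂ ∉ m := by
    intro h
    have : a₂ ∈ A \ {a₁, a₂} := hm.2 ▸ List.mem_toFinset.mpr h
    simp at this
  constructor
  · simp [List.nodup_append, hm.1, h1m, h2m, List.disjoint_cons_right, hne.symm]
    intro b hb
    exact ⟨fun h => h2m (by rw [← h]; exact hb), fun h => h1m (by rw [← h]; exact hb)⟩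
  · rw [List.toFinset_append, hm.2]
    ext c
    simp only [List.toFinset_cons, List.toFinset_nil, insert_empty_eq, Finset.mem_union,
      Finset.mem_sdiff, Finset.mem_insert, Finset.mem_singleton]
    constructor
    · rintro (⟨hc, _⟩ | rfl | rfl) <;> [exact hc; exact h2; exact h1]
    · intro hc
      by_cases hc1 : c = a₁
      · exact Or.inr (Or.inr hc1)
      · by_cases hc2 : c = a₂
        · exact Or.inr (Or.inl hc2)
        · exact Or.inl ⟨hc, by tauto⟩

/-! ### Compatible preferences -/

/-- The set of `x`-compatible preferences on `B`. -/
def compatOn (x : Finset α → α) (B : Finset α) : Set (List α) :=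
  {m | m ∈ PrefOn B ∧ ∀ S : Finset α, S ⊆ B → S.card = 3 →
    (restrictPref m S).getLast? ≠ some (x S)}

lemma aspd_compatOn {x : Finset α → α} {A B : Finset α} (hBA : B ⊆ A)
    (hx1 : ∀ T : Finset α, T ⊆ A → T.card = 3 → x T ∈ T) :
    IsASPD B (compatOn x B) := by
  refine ⟨fun m hm => hm.1, fun T hT hc => ?_⟩
  exact ⟨x T, hx1 T (hT.trans hBA) hc, fun m hm => hm.2 T hT hc⟩

lemma compat_restrict {x : Finset α → α} {A B : Finset α} (hBA : B ⊆ A) {l : List α}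
    (hl : l ∈ compatOn x A) : restrictPref l B ∈ compatOn x B := by
  refine ⟨restrict_prefOn hBA hl.1, fun S hS hc => ?_⟩
  rw [restrict_sub hS]
  exact hl.2 S (hS.trans hBA) hc

/-- Master lemma: a maximal ASPD equals the set of all preferences compatible with
any choice of witnesses. -/
lemma master {A : Finset α} {D : Set (List α)} (hD : IsMaximalASPD A D)
    {x : Finset α → α} (hx1 : ∀ T : Finset α, T ⊆ A → T.card = 3 → x T ∈ T)
    (hx2 : ∀ T : Finset α, T ⊆ A → T.card = 3 →
      ∀ l ∈ D, (restrictPref l T).getLast? ≠ some (x T)) :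
    D = compatOn x A := by
  apply Set.Subset.antisymm
  · exact fun l hl => ⟨hD.1.1 hl, fun S hS hc => hx2 S hS hc l hl⟩
  · intro l hl
    by_contra hlD
    refine hD.2 l hl.1 hlD ⟨?_, ?_⟩
    · rintro l' (rfl | hl')
      · exact hl.1
      · exact hD.1.1 hl'
    · intro T hT hc
      refine ⟨x T, hx1 T hT hc, ?_⟩
      rintro l' (rfl | hl')
      · exact hl.2 T hT hc
      · exact hx2 T hT hc l' hl'

/-- A bottom alternative is never a witness of a triple containing it. -/
lemma bottom_not_witness {D : Set (List α)} {x : Finset α → α} {A : Finset α}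
    (hx2 : ∀ T : Finset α, T ⊆ A → T.card = 3 →
      ∀ l ∈ D, (restrictPref l T).getLast? ≠ some (x T))
    {a : α} (hb : ∃ l ∈ D, l.getLast? = some a)
    {S : Finset α} (hS : S ⊆ A) (hc : S.card = 3) (haS : a ∈ S) : x S ≠ a := by
  obtain ⟨l₀, hl₀, hlast⟩ := hb
  obtain ⟨m, rfl⟩ := List.getLast?_eq_some_iff.mp hlast
  intro h
  exact hx2 S hS hc _ hl₀ (by rw [restrict_concat_mem m haS, h])

lemma bottom_mem {A : Finset α} {D : Set (List α)} (hDP : D ⊆ PrefOn A)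
    {a : α} (hb : ∃ l ∈ D, l.getLast? = some a) : a ∈ A := by
  obtain ⟨l₀, hl₀, hlast⟩ := hb
  obtain ⟨m, rfl⟩ := List.getLast?_eq_some_iff.mp hlast
  have := (hDP hl₀).2
  rw [← this]
  simp

/-! ### Identification of the split domains -/

lemma bottomRestrict_eq {A : Finset α} {D : Set (List α)} (hD : IsMaximalASPD A D)
    {x : Finset α → α} (hx1 : ∀ T : Finset α, T ⊆ A → T.card = 3 → x T ∈ T)
    (hx2 : ∀ T : Finset α, T ⊆ A → T.card = 3 →
      ∀ l ∈ D, (restrictPref l T).getLast? ≠ some (x T))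
    {a : α} (hb : ∃ l ∈ D, l.getLast? = some a) :
    bottomRestrict A D a = compatOn x (A.erase a) := by
  have hmaster := master hD hx1 hx2
  have haA := bottom_mem hD.1.1 hb
  ext m
  constructor
  · rintro ⟨l, hlD, hlast, rfl⟩
    obtain ⟨m', rfl⟩ := List.getLast?_eq_some_iff.mp hlast
    have hlP : m' ++ [a] ∈ PrefOn A := hD.1.1 hlD
    have ham' : a ∉ m' := by
      have := hlP.1
      simp [List.nodup_append] at this
      tauto
    have hm'T : m'.toFinset = A.erase a := by
      ext c
      rw [show A = (m' ++ [a]).toFinset from hlP.2.symm]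
      simp only [Finset.mem_erase, List.toFinset_append, Finset.mem_union, List.mem_toFinset,
        List.toFinset_cons, List.toFinset_nil, insert_empty_eq, Finset.mem_singleton]
      constructor
      · intro hc
        exact ⟨fun h => ham' (h ▸ hc), Or.inl hc⟩
      · rintro ⟨hne', (hc | rfl)⟩
        · exact hc
        · exact absurd rfl hne'
    have hrest : restrictPref (m' ++ [a]) (A.erase a) = m' := by
      rw [restrict_concat_not_mem _ (Finset.notMem_erase a A)]
      exact restrict_eq_self (fun b hb' => hm'T ▸ List.mem_toFinset.mpr hb')
    rw [hrest]
    refine ⟨⟨(List.nodup_append.mp hlP.1).1, hm'T⟩, fun S hS hc => ?_⟩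
    have h2 := hx2 S (hS.trans (Finset.erase_subset _ _)) hc _ hlD
    rwa [restrict_concat_not_mem _ (fun h => Finset.notMem_erase a A (hS h))] at h2
  · intro hm
    have hrest : restrictPref (m ++ [a]) (A.erase a) = m := by
      rw [restrict_concat_not_mem _ (Finset.notMem_erase a A)]
      exact restrict_eq_self (fun b hb' => hm.1.2 ▸ List.mem_toFinset.mpr hb')
    refine ⟨m ++ [a], ?_, List.getLast?_concat, hrest.symm⟩
    rw [hmaster]
    refine ⟨prefOn_concat haA hm.1, fun S hS hc => ?_⟩
    by_cases haS : a ∈ S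
    · rw [restrict_concat_mem _ haS]
      intro h
      exact bottom_not_witness hx2 hb hS hc haS (by injection h with h'; exact h'.symm)
    · rw [restrict_concat_not_mem _ haS]
      exact hm.2 S (Finset.subset_erase.mpr ⟨hS, haS⟩) hc

lemma max_compat_erase {A : Finset α} {D : Set (List α)} (hD : IsMaximalASPD A D)
    {x : Finset α → α} (hx1 : ∀ T : Finset α, T ⊆ A → T.card = 3 → x T ∈ T)
    (hx2 : ∀ T : Finset α, T ⊆ A → T.card = 3 →
      ∀ l ∈ D, (restrictPref l T).getLast? ≠ some (x T))
    {a₁ : α} (hb₁ : ∃ l ∈ D, l.getLast? = some a₁) :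
    IsMaximalASPD (A.erase a₁) (compatOn x (A.erase a₁)) := by
  have hmaster := master hD hx1 hx2
  have haA : a₁ ∈ A := bottom_mem hD.1.1 hb₁
  refine ⟨aspd_compatOn (Finset.erase_subset _ _) hx1, ?_⟩
  intro m hm hmE hAS
  have hviol : ∃ S : Finset α, S ⊆ A.erase a₁ ∧ S.card = 3 ∧
      (restrictPref m S).getLast? = some (x S) := by
    by_contra h
    push_neg at h
    exact hmE ⟨hm, fun S hS hc => h S hS hc⟩
  obtain ⟨S, hSsub, hScard, hSend⟩ := hviol
  have hSA : S ⊆ A := hSsub.trans (Finset.erase_subset _ _)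
  have ha₁S : a₁ ∉ S := fun h => Finset.notMem_erase a₁ A (hSsub h)
  have hlP : m ++ [a₁] ∈ PrefOn A := prefOn_concat haA hm
  have hlD : m ++ [a₁] ∉ D := by
    rw [hmaster]
    intro hlc
    apply hlc.2 S hSA hScard
    rw [restrict_concat_not_mem _ ha₁S, hSend]
  apply hD.2 _ hlP hlD
  constructor
  · rintro l' (rfl | hl')
    · exact hlP
    · exact hD.1.1 hl'
  · intro T hT hc
    by_cases ha₁T : a₁ ∈ T
    · refine ⟨x T, hx1 T hT hc, ?_⟩
      rintro l' (rfl | hl')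
      · rw [restrict_concat_mem _ ha₁T]
        intro h
        exact bottom_not_witness hx2 hb₁ hT hc ha₁T (by injection h with h'; exact h'.symm)
      · exact hx2 T hT hc l' hl'
    · have hTe : T ⊆ A.erase a₁ := Finset.subset_erase.mpr ⟨hT, ha₁T⟩
      obtain ⟨y, hyT, hy⟩ := hAS.2 T hTe hc
      refine ⟨y, hyT, ?_⟩
      rintro l' (rfl | hl')
      · rw [restrict_concat_not_mem _ ha₁T]
        exact hy m (Set.mem_insert _ _)
      · have hres : restrictPref l' (A.erase a₁) ∈ compatOn x (A.erase a₁) :=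
          compat_restrict (Finset.erase_subset _ _)
            (show l' ∈ compatOn x A from hmaster ▸ hl')
        have h2 := hy _ (Set.mem_insert_of_mem _ hres)
        rwa [restrict_sub hTe] at h2

lemma bottom2Restrict_eq {A : Finset α} {D : Set (List α)} (hD : IsMaximalASPD A D)
    (hA : 3 ≤ A.card)
    {x : Finset α → α} (hx1 : ∀ T : Finset α, T ⊆ A → T.card = 3 → x T ∈ T)
    (hx2 : ∀ T : Finset α, T ⊆ A → T.card = 3 →
      ∀ l ∈ D, (restrictPref l T).getLast? ≠ some (x T))
    {a₁ a₂ : α} (hne : a₁ ≠ a₂) (hb₁ : ∃ l ∈ D, l.getLast? = some a₁)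
    (hb₂ : ∃ l ∈ D, l.getLast? = some a₂) :
    bottom2Restrict A D a₁ a₂ = compatOn x (A \ {a₁, a₂}) := by
  have hmaster := master hD hx1 hx2
  have ha₁A : a₁ ∈ A := bottom_mem hD.1.1 hb₁
  have ha₂A : a₂ ∈ A := bottom_mem hD.1.1 hb₂
  have hCsub : A \ {a₁, a₂} ⊆ A := Finset.sdiff_subset
  have ha₁C : a₁ ∉ A \ {a₁, a₂} := by simp
  have ha₂C : a₂ ∉ A \ {a₁, a₂} := by simp
  ext m
  constructor
  · rintro ⟨l, hlD, hlast, hsec, rfl⟩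
    have hlP : l ∈ PrefOn A := hD.1.1 hlD
    obtain ⟨m₀, rfl⟩ : ∃ m₀, l = m₀ ++ [a₂, a₁] := by
      obtain ⟨m', rfl⟩ := List.getLast?_eq_some_iff.mp hlast
      have hlen : m'.length + 1 = A.card := by
        have := List.toFinset_card_of_nodup hlP.1
        rw [hlP.2] at this
        simpa using this.symm
      have hlt : A.card - 2 < m'.length := by omega
      rw [List.getElem?_append_left hlt] at hsec
      have : m'.getLast? = some a₂ := by
        rw [List.getLast?_eq_getElem?, show m'.length - 1 = A.card - 2 by omega]
        exact hsec
      obtain ⟨m₀, rfl⟩ := List.getLast?_eq_some_iff.mp this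
      exact ⟨m₀, by simp⟩
    have hsplit : m₀ ++ [a₂, a₁] = (m₀ ++ [a₂]) ++ [a₁] := by simp
    have h1m : a₁ ∉ m₀ := by
      have := hlP.1
      simp [List.nodup_append, List.disjoint_cons_right] at this
      intro h
      exact (this.2.2 a₁ h).2 rfl
    have h2m : a₂ ∉ m₀ := by
      have := hlP.1
      simp [List.nodup_append, List.disjoint_cons_right] at this
      intro h
      exact (this.2.2 a₂ h).1 rfl
    have hm₀T : m₀.toFinset = A \ {a₁, a₂} := by
      ext c
      rw [show A = (m₀ ++ [a₂, a₁]).toFinset from hlP.2.symm]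
      simp only [Finset.mem_sdiff, List.toFinset_append, Finset.mem_union, List.mem_toFinset,
        List.toFinset_cons, List.toFinset_nil, insert_empty_eq, Finset.mem_insert,
        Finset.mem_singleton]
      constructor
      · intro hc
        refine ⟨Or.inl hc, ?_⟩
        rintro (rfl | rfl)
        · exact h1m hc
        · exact h2m hc
      · rintro ⟨(hc | rfl | rfl), hnc⟩ <;> tauto
    have hrest : restrictPref (m₀ ++ [a₂, a₁]) (A \ {a₁, a₂}) = m₀ := by
      rw [hsplit, restrict_concat_not_mem _ ha₁C, restrict_concat_not_mem _ ha₂C]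
      exact restrict_eq_self (fun b hb' => hm₀T ▸ List.mem_toFinset.mpr hb')
    rw [hrest]
    have hnod : m₀.Nodup := by
      have := hlP.1
      rw [List.nodup_append] at this
      exact this.1
    refine ⟨⟨hnod, hm₀T⟩, fun S hS hc => ?_⟩
    have ha₁S : a₁ ∉ S := fun h => absurd (hS h) (by simp)
    have ha₂S : a₂ ∉ S := fun h => absurd (hS h) (by simp)
    have h2 := hx2 S (hS.trans hCsub) hc _ hlD
    rwa [hsplit, restrict_concat_not_mem _ ha₁S, restrict_concat_not_mem _ ha₂S] at h2
  · intro hm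
    have hsplit : m ++ [a₂, a₁] = (m ++ [a₂]) ++ [a₁] := by simp
    have hmem : ∀ b ∈ m, b ∈ A \ {a₁, a₂} := fun b hb' => hm.1.2 ▸ List.mem_toFinset.mpr hb'
    have hlC : m ++ [a₂, a₁] ∈ compatOn x A := by
      refine ⟨prefOn_concat2 ha₁A ha₂A hne hm.1, fun S hS hc => ?_⟩
      by_cases ha₁S : a₁ ∈ S
      · rw [hsplit, restrict_concat_mem _ ha₁S]
        intro h
        exact bottom_not_witness hx2 hb₁ hS hc ha₁S (by injection h with h'; exact h'.symm)
      · by_cases ha₂S : a₂ ∈ S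
        · rw [hsplit, restrict_concat_not_mem _ ha₁S, restrict_concat_mem _ ha₂S]
          intro h
          exact bottom_not_witness hx2 hb₂ hS hc ha₂S (by injection h with h'; exact h'.symm)
        · rw [hsplit, restrict_concat_not_mem _ ha₁S, restrict_concat_not_mem _ ha₂S]
          refine hm.2 S (Finset.subset_sdiff.mpr ⟨hS, ?_⟩) hc
          rw [Finset.disjoint_right]
          intro c hc'
          rcases Finset.mem_insert.mp hc' with rfl | hc''
          · exact ha₁S
          · rw [Finset.mem_singleton] at hc''
            subst hc''
            exact ha₂S
    have hlen : m.length = A.card - 2 := by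
      have h1 := List.toFinset_card_of_nodup hm.1.1
      rw [hm.1.2] at h1
      have hsub : ({a₁, a₂} : Finset α) ⊆ A := by
        rw [Finset.insert_subset_iff]
        exact ⟨ha₁A, Finset.singleton_subset_iff.mpr ha₂A⟩
      have hc2 : ({a₁, a₂} : Finset α).card = 2 := by
        rw [Finset.card_insert_of_notMem (by simpa using hne), Finset.card_singleton]
      rw [Finset.card_sdiff_of_subset hsub, hc2] at h1
      omega
    refine ⟨m ++ [a₂, a₁], hmaster ▸ hlC, by rw [hsplit]; exact List.getLast?_concat, ?_, ?_⟩
    · rw [← hlen, List.getElem?_append_right (le_refl _)]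
      simp
    · symm
      rw [hsplit, restrict_concat_not_mem _ ha₁C, restrict_concat_not_mem _ ha₂C]
      exact restrict_eq_self hmem

lemma max_compat_sdiff {A : Finset α} {D : Set (List α)} (hD : IsMaximalASPD A D)
    {x : Finset α → α} (hx1 : ∀ T : Finset α, T ⊆ A → T.card = 3 → x T ∈ T)
    (hx2 : ∀ T : Finset α, T ⊆ A → T.card = 3 →
      ∀ l ∈ D, (restrictPref l T).getLast? ≠ some (x T))
    {a₁ a₂ : α} (hne : a₁ ≠ a₂) (hb₁ : ∃ l ∈ D, l.getLast? = some a₁)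
    (hb₂ : ∃ l ∈ D, l.getLast? = some a₂) :
    IsMaximalASPD (A \ {a₁, a₂}) (compatOn x (A \ {a₁, a₂})) := by
  have hmaster := master hD hx1 hx2
  have ha₁A : a₁ ∈ A := bottom_mem hD.1.1 hb₁
  have ha₂A : a₂ ∈ A := bottom_mem hD.1.1 hb₂
  have hCsub : A \ {a₁, a₂} ⊆ A := Finset.sdiff_subset
  refine ⟨aspd_compatOn hCsub hx1, ?_⟩
  intro m hm hmE hAS
  have hviol : ∃ S : Finset α, S ⊆ A \ {a₁, a₂} ∧ S.card = 3 ∧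
      (restrictPref m S).getLast? = some (x S) := by
    by_contra h
    push_neg at h
    exact hmE ⟨hm, fun S hS hc => h S hS hc⟩
  obtain ⟨S, hSsub, hScard, hSend⟩ := hviol
  have hSA : S ⊆ A := hSsub.trans hCsub
  have ha₁S : a₁ ∉ S := fun h => absurd (hSsub h) (by simp)
  have ha₂S : a₂ ∉ S := fun h => absurd (hSsub h) (by simp)
  have hsplit : m ++ [a₂, a₁] = (m ++ [a₂]) ++ [a₁] := by simp
  have hlP : m ++ [a₂, a₁] ∈ PrefOn A := prefOn_concat2 ha₁A ha₂A hne hm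
  have hlD : m ++ [a₂, a₁] ∉ D := by
    rw [hmaster]
    intro hlc
    apply hlc.2 S hSA hScard
    rw [hsplit, restrict_concat_not_mem _ ha₁S, restrict_concat_not_mem _ ha₂S, hSend]
  apply hD.2 _ hlP hlD
  constructor
  · rintro l' (rfl | hl')
    · exact hlP
    · exact hD.1.1 hl'
  · intro T hT hc
    by_cases ha₁T : a₁ ∈ T
    · refine ⟨x T, hx1 T hT hc, ?_⟩
      rintro l' (rfl | hl')
      · rw [hsplit, restrict_concat_mem _ ha₁T]
        intro h
        exact bottom_not_witness hx2 hb₁ hT hc ha₁T (by injection h with h'; exact h'.symm)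
      · exact hx2 T hT hc l' hl'
    · by_cases ha₂T : a₂ ∈ T
      · refine ⟨x T, hx1 T hT hc, ?_⟩
        rintro l' (rfl | hl')
        · rw [hsplit, restrict_concat_not_mem _ ha₁T, restrict_concat_mem _ ha₂T]
          intro h
          exact bottom_not_witness hx2 hb₂ hT hc ha₂T (by injection h with h'; exact h'.symm)
        · exact hx2 T hT hc l' hl'
      · have hTC : T ⊆ A \ {a₁, a₂} := by
          refine Finset.subset_sdiff.mpr ⟨hT, ?_⟩
          rw [Finset.disjoint_right]
          intro c hc'
          rcases Finset.mem_insert.mp hc' with rfl | hc''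
          · exact ha₁T
          · rw [Finset.mem_singleton] at hc''
            subst hc''
            exact ha₂T
        obtain ⟨y, hyT, hy⟩ := hAS.2 T hTC hc
        refine ⟨y, hyT, ?_⟩
        rintro l' (rfl | hl')
        · rw [hsplit, restrict_concat_not_mem _ ha₁T, restrict_concat_not_mem _ ha₂T]
          exact hy m (Set.mem_insert _ _)
        · have hres : restrictPref l' (A \ {a₁, a₂}) ∈ compatOn x (A \ {a₁, a₂}) :=
            compat_restrict hCsub (show l' ∈ compatOn x A from hmaster ▸ hl')
          have h2 := hy _ (Set.mem_insert_of_mem _ hres)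
          rwa [restrict_sub hTC] at h2

/-- Splitting a maximal Arrow's single-peaked domain `D` on at least three
alternatives at its two bottom alternatives `a₁, a₂`: the domains `D₁`, `D₂`,
`D₁₂`, `D₂₁` are maximal ASPDs on `A ∖ {a₁}`, `A ∖ {a₂}`, `A ∖ {a₁, a₂}` and
`A ∖ {a₁, a₂}` respectively, and `D₁₂ = D₂₁`. -/
theorem maximal_aspd_splitting (A : Finset α) (D : Set (List α))
    (hD : IsMaximalASPD A D) (hA : 3 ≤ A.card) (a₁ a₂ : α) (hne : a₁ ≠ a₂)
    (hb₁ : ∃ l ∈ D, l.getLast? = some a₁) (hb₂ : ∃ l ∈ D, l.getLast? = some a₂) :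
    IsMaximalASPD (A.erase a₁) (bottomRestrict A D a₁) ∧
    IsMaximalASPD (A.erase a₂) (bottomRestrict A D a₂) ∧
    IsMaximalASPD (A \ {a₁, a₂}) (bottom2Restrict A D a₁ a₂) ∧
    IsMaximalASPD (A \ {a₁, a₂}) (bottom2Restrict A D a₂ a₁) ∧
    bottom2Restrict A D a₁ a₂ = bottom2Restrict A D a₂ a₁ := by
  have hnea : Nonempty α := by
    obtain ⟨a, -⟩ := Finset.card_pos.mp (show 0 < A.card by omega)
    exact ⟨a⟩
  inhabit α
  obtain ⟨x, hx1, hx2⟩ : ∃ x : Finset α → α,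
      (∀ T : Finset α, T ⊆ A → T.card = 3 → x T ∈ T) ∧
      (∀ T : Finset α, T ⊆ A → T.card = 3 →
        ∀ l ∈ D, (restrictPref l T).getLast? ≠ some (x T)) := by
    choose! x hx1 hx2 using hD.1.2
    exact ⟨x, hx1, hx2⟩
  have hpair : ({a₂, a₁} : Finset α) = {a₁, a₂} := Finset.pair_comm a₂ a₁
  have e1 := bottomRestrict_eq hD hx1 hx2 hb₁
  have e2 := bottomRestrict_eq hD hx1 hx2 hb₂
  have e12 := bottom2Restrict_eq hD hA hx1 hx2 hne hb₁ hb₂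
  have e21 := bottom2Restrict_eq hD hA hx1 hx2 hne.symm hb₂ hb₁
  rw [hpair] at e21
  refine ⟨?_, ?_, ?_, ?_, ?_⟩
  · rw [e1]; exact max_compat_erase hD hx1 hx2 hb₁
  · rw [e2]; exact max_compat_erase hD hx1 hx2 hb₂
  · rw [e12]; exact max_compat_sdiff hD hx1 hx2 hne hb₁ hb₂
  · rw [e21]; exact max_compat_sdiff hD hx1 hx2 hne hb₁ hb₂
  · rw [e12, e21]
end
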